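/- For α = −1, the group O₂(−1) is not isomorphic to O(2): there exists no group isomorphism between O₂(−1) and the group of ℝ-linear isometric automorphisms of ℂ (equivalently, the group of 2×2 real orthogonal matrices). -/

import Mathlib

set_option linter.unnecessarySeqFocus false

open Complex

/-- Complex conjugation as a group endomorphism of the circle group. -/
noncomputable def conjC : Circle →* Circle where
  toFun z := ⟨(starRingEnd ℂ) (z : ℂ), by
    simp only [Submonoid.unitSphere, Metric.mem_sphere, dist_zero_right]
    simp [Circle.norm_coe]⟩
  map_one' := by ext; simp
  map_mul' a b := by ext; simp; rfl

@[simp] lemma conjC_coe (z : Circle) : (conjC z : ℂ) = (starRingEnd ℂ) (z : ℂ) := rfl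

@[simp] lemma conjC_conjC (z : Circle) : conjC (conjC z) = z := by
  ext; simp

/-- The element `-1` of the circle group. -/
noncomputable def negOneC : Circle := ⟨-1, by
  simp only [Submonoid.unitSphere, Metric.mem_sphere, dist_zero_right]
  simp⟩

@[simp] lemma negOneC_coe : (negOneC : ℂ) = -1 := rfl

/-- The sign `α = ±1` as an element of the circle group. -/
noncomputable def sgnC (α : ℤˣ) : Circle := if α = 1 then 1 else negOneC

/-- The underlying type of a twisted extension of `ℤ₂ = {0̂, 1̂}` by a commutative group `A`,
with twisting endomorphism `τ` and cocycle value `a₀`.  An element `⟨z, t⟩` stands for the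
pair `(z, t)`.  The group `O₂(α)` of the paper is the case `A = Circle`, `τ` = complex
conjugation, `a₀ = α = ±1`. -/
@[ext]
structure Tw (A : Type*) [CommGroup A] (τ : A →* A) (a₀ : A) where
  z : A
  t : ZMod 2

namespace Tw

variable {A : Type*} [CommGroup A] {τ : A →* A} {a₀ : A}

/-- The multiplication `(z₁,0̂)(z₂,t) = (z₁z₂, t)`, `(z₁,1̂)(z₂,0̂) = (z₁·τ(z₂), 1̂)`,
`(z₁,1̂)(z₂,1̂) = (a₀·z₁·τ(z₂), 0̂)`. -/
instance : Mul (Tw A τ a₀) :=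
  ⟨fun g h => ⟨(if g.t = 1 ∧ h.t = 1 then a₀ else 1) * g.z * (if g.t = 1 then τ h.z else h.z),
    g.t + h.t⟩⟩

/-- The unit `(1, 0̂)`. -/
instance : One (Tw A τ a₀) := ⟨⟨1, 0⟩⟩

instance : Inv (Tw A τ a₀) := ⟨fun g => ⟨if g.t = 1 then a₀⁻¹ * τ g.z⁻¹ else g.z⁻¹, g.t⟩⟩

@[simp] lemma mul_z (g h : Tw A τ a₀) :
    (g * h).z = (if g.t = 1 ∧ h.t = 1 then a₀ else 1) * g.z * (if g.t = 1 then τ h.z else h.z) :=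
  rfl

@[simp] lemma mul_t (g h : Tw A τ a₀) : (g * h).t = g.t + h.t := rfl

@[simp] lemma one_z : (1 : Tw A τ a₀).z = 1 := rfl
@[simp] lemma one_t : (1 : Tw A τ a₀).t = 0 := rfl

@[simp] lemma inv_z (g : Tw A τ a₀) :
    (g⁻¹).z = if g.t = 1 then a₀⁻¹ * τ g.z⁻¹ else g.z⁻¹ := rfl
@[simp] lemma inv_t (g : Tw A τ a₀) : (g⁻¹).t = g.t := rfl

lemma zmod2_cases : ∀ t : ZMod 2, t = 0 ∨ t = 1 := by decide

instance group [Fact (∀ a : A, τ (τ a) = a)] [Fact (τ a₀ = a₀)] : Group (Tw A τ a₀) := by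
  have hττ := Fact.out (p := ∀ a : A, τ (τ a) = a)
  have hτa := Fact.out (p := τ a₀ = a₀)
  refine Group.ofLeftAxioms ?_ ?_ ?_
  · rintro ⟨z₁, t₁⟩ ⟨z₂, t₂⟩ ⟨z₃, t₃⟩
    rcases zmod2_cases t₁ with rfl | rfl <;> rcases zmod2_cases t₂ with rfl | rfl <;>
      rcases zmod2_cases t₃ with rfl | rfl <;> ext <;>
      simp [hττ, hτa, map_mul, mul_comm, mul_assoc, mul_left_comm] <;> decide
  · rintro ⟨z, t⟩
    ext <;> simp
  · rintro ⟨z, t⟩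
    rcases zmod2_cases t with rfl | rfl <;> ext <;>
      simp [hττ, hτa, map_mul, mul_comm, mul_assoc, mul_left_comm] <;> decide

end Tw

instance : Fact (∀ a : Circle, conjC (conjC a) = a) := ⟨conjC_conjC⟩

instance (α : ℤˣ) : Fact (conjC (sgnC α) = sgnC α) := ⟨by
  rcases Int.units_eq_one_or α with rfl | rfl <;> ext <;> simp [sgnC, negOneC_coe]⟩

/-- The group `O₂(α)` for a sign `α ∈ {−1, 1}`: underlying set `Circle × ℤ₂` with the
twisted multiplication `(z₁,0̂)(z₂,t) = (z₁z₂,t)`, `(z₁,1̂)(z₂,0̂) = (z₁·conj(z₂),1̂)`,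
`(z₁,1̂)(z₂,1̂) = (α·z₁·conj(z₂),0̂)` and unit `(1,0̂)`. -/
abbrev O2 (α : ℤˣ) : Type := Tw Circle conjC (sgnC α)

/-- For `α = −1`, the group `O₂(−1)` is not isomorphic to `O(2)`, the group of ℝ-linear
isometric automorphisms of `ℂ`. -/
lemma sgnC_neg_one : sgnC (-1) = negOneC := by
  simp only [sgnC, if_neg (by decide : (-1 : ℤˣ) ≠ 1)]

lemma O2_involution_unique (x : O2 (-1)) (h2 : x * x = 1) (h1 : x ≠ 1) :
    x = ⟨negOneC, 0⟩ := by
  obtain ⟨z, t⟩ := x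
  have hmc : (z : ℂ) * (starRingEnd ℂ) (z : ℂ) = 1 := by
    rw [Complex.mul_conj, Complex.normSq_eq_norm_sq, Circle.norm_coe]
    norm_num
  rcases Tw.zmod2_cases t with rfl | rfl
  · have hz : z * z = 1 := by
      have := congrArg Tw.z h2
      simpa using this
    have hz' : (z : ℂ) * (z : ℂ) = 1 := by
      have := congrArg Subtype.val hz
      simpa using this
    have hfac : ((z : ℂ) - 1) * ((z : ℂ) + 1) = 0 := by linear_combination hz'
    rcases mul_eq_zero.mp hfac with h | h
    · have hz1 : z = 1 := by ext; simpa [sub_eq_zero] using h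
      exact absurd (by rw [hz1]; rfl) h1
    · have hz1 : z = negOneC := by ext; simpa [eq_neg_iff_add_eq_zero] using h
      rw [hz1]
  · exfalso
    have hzz := congrArg Tw.z h2
    simp only [Tw.mul_z, Tw.one_z, if_pos (And.intro rfl rfl), if_pos rfl] at hzz
    have : (sgnC (-1) : ℂ) * ((z : ℂ) * (starRingEnd ℂ) (z : ℂ)) = 1 := by
      have := congrArg Subtype.val hzz
      push_cast at this ⊢
      simpa [mul_assoc] using this
    rw [hmc, mul_one, sgnC_neg_one] at this
    norm_num at this

theorem O2_neg_not_iso_orthogonalGroup :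
    IsEmpty (O2 (-1) ≃* (ℂ ≃ₗᵢ[ℝ] ℂ)) := by
  refine ⟨fun φ => ?_⟩
  set a : ℂ ≃ₗᵢ[ℝ] ℂ := Complex.conjLIE with ha
  set b : ℂ ≃ₗᵢ[ℝ] ℂ := LinearIsometryEquiv.neg ℝ with hb
  have haa : a * a = 1 := by
    ext c
    simp [ha]
  have hbb : b * b = 1 := by
    ext c
    simp [hb]
  have ha1 : a ≠ 1 := by
    intro h
    have := congrArg (fun f : ℂ ≃ₗᵢ[ℝ] ℂ => f Complex.I) h
    simp [ha, Complex.conj_I] at this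
    exact Complex.I_ne_zero (by linear_combination -this / 2)
  have hb1 : b ≠ 1 := by
    intro h
    have := congrArg (fun f : ℂ ≃ₗᵢ[ℝ] ℂ => f 1) h
    simp [hb] at this
    norm_num at this
  have hab : a ≠ b := by
    intro h
    have := congrArg (fun f : ℂ ≃ₗᵢ[ℝ] ℂ => f 1) h
    simp [ha, hb] at this
    norm_num at this
  have hx := O2_involution_unique (φ.symm a) (by rw [← map_mul, haa, map_one])
    (fun h => ha1 (by simpa using congrArg φ h))
  have hy := O2_involution_unique (φ.symm b) (by rw [← map_mul, hbb, map_one])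
    (fun h => hb1 (by simpa using congrArg φ h))
  exact hab (φ.symm.injective.eq_iff.mp (hx.trans hy.symm))
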